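/- For all M, M̄ > 0, the infima of the total energy satisfy the scaling law h_{M̄} = (M̄/M)^{7/3} h_M. -/

import Mathlib

open MeasureTheory Filter Set Metric
open scoped ENNReal NNReal Topology

noncomputable section

abbrev R3 : Type := EuclideanSpace ℝ (Fin 3)

/-- spatial density induced by a phase-space density, extended-real-valued -/
def rhoE (f : R3 × R3 → ℝ) (x : R3) : ℝ≥0∞ :=
  ∫⁻ v : R3, ENNReal.ofReal (f (x, v))

/-- spatial density, real-valued -/
def rhoR (f : R3 × R3 → ℝ) (x : R3) : ℝ :=
  (rhoE f x).toReal

/-- kinetic energy -/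
def EkinE (f : R3 × R3 → ℝ) : ℝ≥0∞ :=
  (1/2 : ℝ≥0∞) * ∫⁻ p : R3 × R3, ENNReal.ofReal (‖p.2‖ ^ 2 * f p)

/-- the double integral ∫∫ ρ_f(x) ρ_f(y)/|x−y| dx dy -/
def potE (f : R3 × R3 → ℝ) : ℝ≥0∞ :=
  ∫⁻ x : R3, ∫⁻ y : R3, rhoE f x * rhoE f y * ENNReal.ofReal (‖x - y‖⁻¹)

/-- potential energy -/
def EpotR (f : R3 × R3 → ℝ) : ℝ :=
  -(1/2) * (potE f).toReal

/-- total energy -/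
def Hfun (f : R3 × R3 → ℝ) : ℝ :=
  (EkinE f).toReal + EpotR f

/-- Casimir functional -/
def Casimir (Q : ℝ → ℝ) (f : R3 × R3 → ℝ) : ℝ≥0∞ :=
  ∫⁻ p : R3 × R3, ENNReal.ofReal (Q (f p))

/-- the constraint set F_M -/
def FM (Q : ℝ → ℝ) (M : ℝ) : Set (R3 × R3 → ℝ) :=
  {f | Integrable f ∧ (∀ p, 0 ≤ f p) ∧ Casimir Q f = ENNReal.ofReal M ∧ EkinE f < ⊤}

/-- assumptions on the Casimir kernel Q -/
def QAssump (k C₀ : ℝ) (Q : ℝ → ℝ) : Prop :=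
  ContDiffOn ℝ 1 Q (Set.Ici 0) ∧ (∀ s, 0 ≤ s → 0 ≤ Q s) ∧ Q 0 = 0 ∧
    ConvexOn ℝ (Set.Ici 0) Q ∧ ∀ s, 0 ≤ s → C₀ * (s + s ^ (1 + 1/k)) ≤ Q s

/-- Newtonian potential induced by a spatial density -/
def Upot (σ : R3 → ℝ) (x : R3) : ℝ :=
  -∫ y : R3, σ y / ‖x - y‖

/-- gradient of the Newtonian potential -/
def gradU (σ : R3 → ℝ) (x : R3) : R3 :=
  ∫ y : R3, (σ y / ‖x - y‖ ^ 3) • (x - y)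

/-- particle energy -/
def Efun (f : R3 × R3 → ℝ) (p : R3 × R3) : ℝ :=
  (1/2) * ‖p.2‖ ^ 2 + Upot (rhoR f) p.1

open scoped Pointwise

-- ### auxiliary scaling machinery

lemma smul_prod_smul' {α β : Type*} [MeasurableSpace α] [MeasurableSpace β]
    (c d : ℝ≥0) (μ : Measure α) (ν : Measure β) [SigmaFinite μ] [SigmaFinite ν] :
    (c • μ).prod (d • ν) = (c * d) • (μ.prod ν) :=
  Measure.prod_eq (μ := c • μ) (ν := d • ν) (μν := (c * d) • μ.prod ν) fun s t _ _ => by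
    simp only [Measure.smul_apply, Measure.prod_prod, ENNReal.smul_def, smul_eq_mul,
      ENNReal.coe_mul]
    ring

def smulEquiv {c : ℝ} (hc : c ≠ 0) : R3 ≃ᵐ R3 :=
  (Homeomorph.smul (isUnit_iff_ne_zero.2 hc).unit (α := R3)).toMeasurableEquiv

lemma smulEquiv_apply {c : ℝ} (hc : c ≠ 0) (x : R3) : smulEquiv hc x = c • x := by
  simp [smulEquiv, Homeomorph.smul, Units.smul_def]

lemma map_smul_R3 {c : ℝ} (hc : 0 < c) :
    (volume : Measure R3).map (smulEquiv hc.ne') = ((c ^ 3)⁻¹).toNNReal • volume := by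
  have he : (⇑(smulEquiv hc.ne') : R3 → R3) = (c • ·) := funext (smulEquiv_apply hc.ne')
  rw [he, Measure.map_addHaar_smul volume hc.ne', finrank_euclideanSpace_fin,
    abs_of_pos (by positivity : (0:ℝ) < (c ^ 3)⁻¹), ENNReal.ofReal, ENNReal.smul_def]

lemma lintegral_comp_smul_R3 {c : ℝ} (hc : 0 < c) (g : R3 → ℝ≥0∞) :
    ∫⁻ x : R3, g (c • x) = ENNReal.ofReal ((c ^ 3)⁻¹) * ∫⁻ x : R3, g x := by
  calc ∫⁻ x : R3, g (c • x) = ∫⁻ x : R3, g (smulEquiv hc.ne' x) := by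
        simp only [smulEquiv_apply hc.ne']
    _ = ∫⁻ x : R3, g x ∂((volume : Measure R3).map (smulEquiv hc.ne')) :=
        (lintegral_map_equiv g (smulEquiv hc.ne')).symm
    _ = ENNReal.ofReal ((c ^ 3)⁻¹) * ∫⁻ x : R3, g x := by
        rw [map_smul_R3 hc, ENNReal.smul_def, lintegral_smul_measure, ENNReal.ofReal, smul_eq_mul]

/-- the rescaling map on phase space -/
def Lmap (a : ℝ) (p : R3 × R3) : R3 × R3 := (a • p.1, (a ^ 2)⁻¹ • p.2)

/-- the rescaling as a measurable equivalence -/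
def LmapE {a : ℝ} (ha : 0 < a) : (R3 × R3) ≃ᵐ (R3 × R3) :=
  (smulEquiv ha.ne').prodCongr (smulEquiv (by positivity : (0:ℝ) < (a ^ 2)⁻¹).ne')

lemma LmapE_apply {a : ℝ} (ha : 0 < a) (p : R3 × R3) : LmapE ha p = Lmap a p := by
  cases p with
  | mk x v => simp [LmapE, Lmap, MeasurableEquiv.prodCongr, Prod.map, smulEquiv_apply]

lemma map_LmapE {a : ℝ} (ha : 0 < a) :
    (volume : Measure (R3 × R3)).map (LmapE ha) = (a ^ 3).toNNReal • volume := by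
  have h2 : (0:ℝ) < (a ^ 2)⁻¹ := by positivity
  have hprod : (volume : Measure (R3 × R3)) = (volume : Measure R3).prod volume := rfl
  have hmap : (⇑(LmapE ha) : R3 × R3 → R3 × R3)
      = Prod.map (⇑(smulEquiv ha.ne')) (⇑(smulEquiv h2.ne')) := rfl
  rw [hprod, hmap, ← Measure.map_prod_map _ _ (smulEquiv ha.ne').measurable
      (smulEquiv h2.ne').measurable, map_smul_R3 ha, map_smul_R3 h2,
    smul_prod_smul']
  congr 1
  rw [← Real.toNNReal_mul (by positivity)]
  congr 1
  field_simp

lemma lintegral_comp_Lmap {a : ℝ} (ha : 0 < a) (F : R3 × R3 → ℝ≥0∞) :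
    ∫⁻ p : R3 × R3, F (Lmap a p) = ENNReal.ofReal (a ^ 3) * ∫⁻ p : R3 × R3, F p := by
  calc ∫⁻ p : R3 × R3, F (Lmap a p) = ∫⁻ p : R3 × R3, F (LmapE ha p) := by
        simp only [LmapE_apply ha]
    _ = ∫⁻ p : R3 × R3, F p ∂((volume : Measure (R3 × R3)).map (LmapE ha)) :=
        (lintegral_map_equiv F (LmapE ha)).symm
    _ = _ := by
        rw [map_LmapE ha, ENNReal.smul_def, lintegral_smul_measure, ENNReal.ofReal, smul_eq_mul]

/-- the rescaled phase-space density -/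
def resc (a : ℝ) (f : R3 × R3 → ℝ) : R3 × R3 → ℝ := fun p => f (Lmap a p)

lemma resc_resc (a b : ℝ) (f : R3 × R3 → ℝ) : resc b (resc a f) = resc (a * b) f := by
  funext p
  show f (Lmap a (Lmap b p)) = f (Lmap (a * b) p)
  congr 1
  unfold Lmap
  refine Prod.ext ?_ ?_
  · simp [smul_smul]
  · simp [smul_smul, mul_pow, mul_inv, mul_comm]

lemma resc_one (f : R3 × R3 → ℝ) : resc 1 f = f := by
  funext p; simp [resc, Lmap]

lemma Casimir_resc {a : ℝ} (ha : 0 < a) (Q : ℝ → ℝ) (f : R3 × R3 → ℝ) :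
    Casimir Q (resc a f) = ENNReal.ofReal (a ^ 3) * Casimir Q f :=
  lintegral_comp_Lmap ha fun p => ENNReal.ofReal (Q (f p))

lemma EkinE_resc {a : ℝ} (ha : 0 < a) (f : R3 × R3 → ℝ) :
    EkinE (resc a f) = ENNReal.ofReal (a ^ 7) * EkinE f := by
  have ha' : a ≠ 0 := ha.ne'
  have h1 : ∀ p : R3 × R3, ENNReal.ofReal (‖p.2‖ ^ 2 * resc a f p)
      = ENNReal.ofReal (a ^ 4) * ENNReal.ofReal (‖(Lmap a p).2‖ ^ 2 * f (Lmap a p)) := by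
    intro p
    rw [← ENNReal.ofReal_mul (by positivity)]
    congr 1
    have hn : ‖(Lmap a p).2‖ = (a ^ 2)⁻¹ * ‖p.2‖ := by
      simp [Lmap, norm_smul, abs_of_pos (by positivity : (0:ℝ) < (a ^ 2)⁻¹)]
    rw [hn]
    show ‖p.2‖ ^ 2 * f (Lmap a p) = a ^ 4 * (((a ^ 2)⁻¹ * ‖p.2‖) ^ 2 * f (Lmap a p))
    field_simp
  have key : ∫⁻ p : R3 × R3, ENNReal.ofReal (‖p.2‖ ^ 2 * resc a f p)
      = ENNReal.ofReal (a ^ 7) * ∫⁻ p : R3 × R3, ENNReal.ofReal (‖p.2‖ ^ 2 * f p) := by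
    calc ∫⁻ p : R3 × R3, ENNReal.ofReal (‖p.2‖ ^ 2 * resc a f p)
        = ∫⁻ p : R3 × R3, ENNReal.ofReal (a ^ 4) *
            (fun q : R3 × R3 => ENNReal.ofReal (‖q.2‖ ^ 2 * f q)) (Lmap a p) := by
          simp only [h1]
      _ = ENNReal.ofReal (a ^ 4) * ∫⁻ p : R3 × R3,
            (fun q : R3 × R3 => ENNReal.ofReal (‖q.2‖ ^ 2 * f q)) (Lmap a p) :=
          lintegral_const_mul' _ _ ENNReal.ofReal_ne_top
      _ = ENNReal.ofReal (a ^ 4) *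
            (ENNReal.ofReal (a ^ 3) * ∫⁻ p : R3 × R3, ENNReal.ofReal (‖p.2‖ ^ 2 * f p)) := by
          rw [lintegral_comp_Lmap ha (fun q : R3 × R3 => ENNReal.ofReal (‖q.2‖ ^ 2 * f q))]
      _ = ENNReal.ofReal (a ^ 7) * ∫⁻ p : R3 × R3, ENNReal.ofReal (‖p.2‖ ^ 2 * f p) := by
          rw [← mul_assoc, ← ENNReal.ofReal_mul (by positivity)]
          congr 2
          ring
  show (1/2 : ℝ≥0∞) * ∫⁻ p : R3 × R3, ENNReal.ofReal (‖p.2‖ ^ 2 * resc a f p)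
      = ENNReal.ofReal (a ^ 7) * ((1/2 : ℝ≥0∞) * ∫⁻ p : R3 × R3, ENNReal.ofReal (‖p.2‖ ^ 2 * f p))
  rw [key]
  ring

lemma rhoE_resc {a : ℝ} (ha : 0 < a) (f : R3 × R3 → ℝ) (x : R3) :
    rhoE (resc a f) x = ENNReal.ofReal (a ^ 6) * rhoE f (a • x) := by
  have h2 : (0:ℝ) < (a ^ 2)⁻¹ := by positivity
  calc rhoE (resc a f) x
      = ∫⁻ v : R3, (fun w : R3 => ENNReal.ofReal (f (a • x, w))) ((a ^ 2)⁻¹ • v) := rfl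
    _ = ENNReal.ofReal ((((a ^ 2)⁻¹) ^ 3)⁻¹) * ∫⁻ v : R3, ENNReal.ofReal (f (a • x, v)) :=
        lintegral_comp_smul_R3 h2 (fun w : R3 => ENNReal.ofReal (f (a • x, w)))
    _ = ENNReal.ofReal (a ^ 6) * rhoE f (a • x) := by
        rw [rhoE]
        congr 2
        rw [← inv_pow, inv_inv, ← pow_mul]

lemma potE_resc {a : ℝ} (ha : 0 < a) (f : R3 × R3 → ℝ) :
    potE (resc a f) = ENNReal.ofReal (a ^ 7) * potE f := by
  have ha' : a ≠ 0 := ha.ne'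
  have hnorm : ∀ x y : R3, ‖x - y‖⁻¹ = a * ‖a • x - a • y‖⁻¹ := by
    intro x y
    rw [← smul_sub, norm_smul, Real.norm_eq_abs, abs_of_pos ha, mul_inv]
    rcases eq_or_ne ‖x - y‖ 0 with h | h
    · simp [h]
    · field_simp
  have hc13 : ENNReal.ofReal (a ^ 6) * ENNReal.ofReal (a ^ 6) * ENNReal.ofReal a
      = ENNReal.ofReal (a ^ 13) := by
    rw [← ENNReal.ofReal_mul (by positivity), ← ENNReal.ofReal_mul (by positivity)]
    congr 1
    ring
  have hpt : ∀ x y : R3,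
      rhoE (resc a f) x * rhoE (resc a f) y * ENNReal.ofReal (‖x - y‖⁻¹)
      = ENNReal.ofReal (a ^ 13) *
        (rhoE f (a • x) * rhoE f (a • y) * ENNReal.ofReal (‖a • x - a • y‖⁻¹)) := by
    intro x y
    rw [rhoE_resc ha f x, rhoE_resc ha f y, hnorm x y, ENNReal.ofReal_mul ha.le]
    calc (ENNReal.ofReal (a ^ 6) * rhoE f (a • x)) * (ENNReal.ofReal (a ^ 6) * rhoE f (a • y)) *
          (ENNReal.ofReal a * ENNReal.ofReal (‖a • x - a • y‖⁻¹))
        = (ENNReal.ofReal (a ^ 6) * ENNReal.ofReal (a ^ 6) * ENNReal.ofReal a) *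
          (rhoE f (a • x) * rhoE f (a • y) * ENNReal.ofReal (‖a • x - a • y‖⁻¹)) := by ring
      _ = _ := by rw [hc13]
  calc potE (resc a f)
      = ∫⁻ x : R3, ∫⁻ y : R3, ENNReal.ofReal (a ^ 13) *
          (rhoE f (a • x) * rhoE f (a • y) * ENNReal.ofReal (‖a • x - a • y‖⁻¹)) :=
        lintegral_congr fun x => lintegral_congr fun y => hpt x y
    _ = ENNReal.ofReal (a ^ 13) * ∫⁻ x : R3, ∫⁻ y : R3,
          rhoE f (a • x) * rhoE f (a • y) * ENNReal.ofReal (‖a • x - a • y‖⁻¹) := by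
        rw [← lintegral_const_mul' _ _ ENNReal.ofReal_ne_top]
        exact lintegral_congr fun x => lintegral_const_mul' _ _ ENNReal.ofReal_ne_top
    _ = ENNReal.ofReal (a ^ 13) * ∫⁻ x : R3, ENNReal.ofReal ((a ^ 3)⁻¹) * ∫⁻ y : R3,
          rhoE f (a • x) * rhoE f y * ENNReal.ofReal (‖a • x - y‖⁻¹) := by
        congr 1
        exact lintegral_congr fun x => lintegral_comp_smul_R3 ha
          (fun w => rhoE f (a • x) * rhoE f w * ENNReal.ofReal (‖a • x - w‖⁻¹))
    _ = ENNReal.ofReal (a ^ 13) * (ENNReal.ofReal ((a ^ 3)⁻¹) * ∫⁻ x : R3,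
          (fun u : R3 => ∫⁻ y : R3, rhoE f u * rhoE f y * ENNReal.ofReal (‖u - y‖⁻¹)) (a • x)) := by
        rw [lintegral_const_mul' _ _ ENNReal.ofReal_ne_top]
    _ = ENNReal.ofReal (a ^ 13) * (ENNReal.ofReal ((a ^ 3)⁻¹) *
          (ENNReal.ofReal ((a ^ 3)⁻¹) * potE f)) := by
        rw [lintegral_comp_smul_R3 ha
          (fun u : R3 => ∫⁻ y : R3, rhoE f u * rhoE f y * ENNReal.ofReal (‖u - y‖⁻¹))]
        rfl
    _ = ENNReal.ofReal (a ^ 7) * potE f := by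
        rw [← mul_assoc, ← mul_assoc, ← ENNReal.ofReal_mul (by positivity),
          ← ENNReal.ofReal_mul (by positivity)]
        congr 2
        field_simp

lemma Hfun_resc {a : ℝ} (ha : 0 < a) (f : R3 × R3 → ℝ) :
    Hfun (resc a f) = a ^ 7 * Hfun f := by
  unfold Hfun EpotR
  rw [EkinE_resc ha, potE_resc ha, ENNReal.toReal_mul, ENNReal.toReal_mul,
    ENNReal.toReal_ofReal (by positivity)]
  ring

lemma integrable_resc {a : ℝ} (ha : 0 < a) {f : R3 × R3 → ℝ}
    (hf : Integrable f (volume : Measure (R3 × R3))) :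
    Integrable (resc a f) (volume : Measure (R3 × R3)) := by
  have hrw : resc a f = f ∘ (LmapE ha) := funext fun p => by
    show f (Lmap a p) = f (LmapE ha p)
    rw [LmapE_apply ha]
  rw [hrw, ← integrable_map_equiv (LmapE ha) f, map_LmapE ha, ENNReal.smul_def]
  refine (integrable_smul_measure ?_ ENNReal.coe_ne_top).mpr hf
  simp only [ne_eq, ENNReal.coe_eq_zero]
  exact (Real.toNNReal_pos.mpr (by positivity)).ne'

lemma FM_resc {a : ℝ} (ha : 0 < a) {Q : ℝ → ℝ} {f : R3 × R3 → ℝ} {M : ℝ}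
    (hf : f ∈ FM Q M) : resc a f ∈ FM Q (a ^ 3 * M) := by
  obtain ⟨hint, hpos, hcas, hkin⟩ := hf
  refine ⟨integrable_resc ha hint, fun p => hpos _, ?_, ?_⟩
  · rw [Casimir_resc ha, hcas, ← ENNReal.ofReal_mul (by positivity)]
  · rw [EkinE_resc ha]
    exact ENNReal.mul_lt_top ENNReal.ofReal_lt_top hkin


/-- the scaling law h_{M̄} = (M̄/M)^{7/3} h_M. -/
theorem stmt6 (k C₀ M Mbar : ℝ) (hk : 0 < k) (hk' : k < 7/2) (hC₀ : 0 < C₀)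
    (hM : 0 < M) (hMbar : 0 < Mbar)
    (Q : ℝ → ℝ) (hQ : QAssump k C₀ Q) :
    sInf (Hfun '' FM Q Mbar) = (Mbar / M) ^ ((7:ℝ)/3) * sInf (Hfun '' FM Q M) := by
  have hx : (0:ℝ) < Mbar / M := div_pos hMbar hM
  set a : ℝ := (Mbar / M) ^ ((1:ℝ)/3) with ha_def
  have ha : 0 < a := Real.rpow_pos_of_pos hx _
  have ha3 : a ^ 3 = Mbar / M := by
    rw [ha_def, ← Real.rpow_natCast ((Mbar / M) ^ ((1:ℝ)/3)) 3, ← Real.rpow_mul hx.le]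
    norm_num
  have ha7 : a ^ 7 = (Mbar / M) ^ ((7:ℝ)/3) := by
    rw [ha_def, ← Real.rpow_natCast ((Mbar / M) ^ ((1:ℝ)/3)) 7, ← Real.rpow_mul hx.le]
    norm_num
  have hMbar_eq : a ^ 3 * M = Mbar := by rw [ha3]; field_simp
  have hM_eq : (a⁻¹) ^ 3 * Mbar = M := by
    rw [inv_pow, ha3]
    field_simp
  have himg : Hfun '' FM Q Mbar = (a ^ 7) • (Hfun '' FM Q M) := by
    ext r
    constructor
    · rintro ⟨g, hg, rfl⟩
      have hmem : resc a⁻¹ g ∈ FM Q M := hM_eq ▸ FM_resc (inv_pos.2 ha) hg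
      have hgr : Hfun g = a ^ 7 * Hfun (resc a⁻¹ g) := by
        conv_lhs => rw [show g = resc a (resc a⁻¹ g) by
          rw [resc_resc, inv_mul_cancel₀ ha.ne', resc_one]]
        exact Hfun_resc ha _
      exact Set.mem_smul_set.mpr ⟨Hfun (resc a⁻¹ g), ⟨_, hmem, rfl⟩, by
        rw [smul_eq_mul, ← hgr]⟩
    · intro hr
      obtain ⟨r', hr', rfl⟩ := Set.mem_smul_set.mp hr
      obtain ⟨f, hf, rfl⟩ := hr'
      exact ⟨resc a f, hMbar_eq ▸ FM_resc ha hf, by rw [Hfun_resc ha, smul_eq_mul]⟩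
  rw [himg, Real.sInf_smul_of_nonneg (by positivity), smul_eq_mul, ha7]
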